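/- Let A = {H_1,…,H_l} be a hyperplane arrangement in ℂ^n with only isolated non-normal crossings, each such crossing being a point lying on exactly n+1 hyperplanes. Suppose there is a partition Π_1, …, Π_{n+1} of A and nonzero scalars a_1,…,a_{n+1} with a_1 f_1 + ⋯ + a_{n+1} f_{n+1} = 0 where f_i is the product of the defining linear forms of hyperplanes in Π_i. Then the subspace V of the degree-one part of the Orlik–Solomon algebra spanned by the n vectors {Σ_{H_j∈Π_i} x_j − Σ_{H_j∈Π_{n+1}} x_j : 1 ≤ i ≤ n} is n-isotropic and not contained in any coordinate hyperplane. -/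

import Mathlib

noncomputable section
open ExteriorAlgebra

/-- The canonical degree-one generator `x_i` of the exterior algebra of `ℂ^l`. -/
def xGen (l : ℕ) (i : Fin l) : ExteriorAlgebra ℂ (Fin l → ℂ) :=
  ι ℂ (Pi.single i (1 : ℂ))

/-- The wedge monomial `x_{f 0} ∧ ⋯ ∧ x_{f (m-1)}`. -/
def wedgeMon (l m : ℕ) (f : Fin m → Fin l) : ExteriorAlgebra ℂ (Fin l → ℂ) :=
  (List.ofFn fun k => xGen l (f k)).prod

/-- The Orlik–Solomon boundary `∂(x_{f 0} ∧ ⋯ ∧ x_{f m})`. -/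
def osBoundary (l m : ℕ) (f : Fin (m + 1) → Fin l) : ExteriorAlgebra ℂ (Fin l → ℂ) :=
  ∑ j : Fin (m + 1), ((-1 : ℂ) ^ (j : ℕ)) • wedgeMon l m (f ∘ j.succAbove)

/-- The defining relations of the Orlik–Solomon algebra of the (projective, modelled as
central in `ℂ^{n+1}`) arrangement given by the linear forms `α`. -/
def osRel (n l : ℕ) (α : Fin l → ((Fin (n + 1) → ℂ) →ₗ[ℂ] ℂ)) :
    ExteriorAlgebra ℂ (Fin l → ℂ) → ExteriorAlgebra ℂ (Fin l → ℂ) → Prop :=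
  fun p q =>
    ((∃ (m : ℕ) (f : Fin (m + 1) → Fin l), ¬ LinearIndependent ℂ (fun k => α (f k)) ∧
        p = osBoundary l m f) ∨
     (∃ (m : ℕ) (f : Fin m → Fin l), (⨅ k, LinearMap.ker (α (f k))) = ⊥ ∧
        p = wedgeMon l m f)) ∧ q = 0

/-- The Orlik–Solomon algebra. -/
def OSAlg (n l : ℕ) (α : Fin l → ((Fin (n + 1) → ℂ) →ₗ[ℂ] ℂ)) : Type :=
  RingQuot (osRel n l α)

instance (n l : ℕ) (α : Fin l → ((Fin (n + 1) → ℂ) →ₗ[ℂ] ℂ)) : Ring (OSAlg n l α) :=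
  inferInstanceAs (Ring (RingQuot (osRel n l α)))

instance (n l : ℕ) (α : Fin l → ((Fin (n + 1) → ℂ) →ₗ[ℂ] ℂ)) : Algebra ℂ (OSAlg n l α) :=
  inferInstanceAs (Algebra ℂ (RingQuot (osRel n l α)))

/-- The projection from the exterior algebra onto the Orlik–Solomon algebra. -/
def osProj (n l : ℕ) (α : Fin l → ((Fin (n + 1) → ℂ) →ₗ[ℂ] ℂ)) :
    ExteriorAlgebra ℂ (Fin l → ℂ) →ₐ[ℂ] OSAlg n l α :=
  RingQuot.mkAlgHom ℂ (osRel n l α)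

/-- The flat determined by a set of hyperplane indices. -/
def arrFlat (n l : ℕ) (α : Fin l → ((Fin (n + 1) → ℂ) →ₗ[ℂ] ℂ)) (S : Finset (Fin l)) :
    Submodule ℂ (Fin (n + 1) → ℂ) :=
  ⨅ i ∈ S, LinearMap.ker (α i)

/-- The set of indices of hyperplanes containing a given flat. -/
def onIdx (n l : ℕ) (α : Fin l → ((Fin (n + 1) → ℂ) →ₗ[ℂ] ℂ))
    (P : Submodule ℂ (Fin (n + 1) → ℂ)) : Finset (Fin l) :=
  open Classical in Finset.univ.filter fun i => P ≤ LinearMap.ker (α i)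

/-- The linear form on `ℂ^{n+1}` with coefficient vector `b`. -/
def linForm (n : ℕ) (b : Fin (n + 1) → ℂ) : (Fin (n + 1) → ℂ) →ₗ[ℂ] ℂ :=
  ∑ m, b m • LinearMap.proj m

/-- The defining linear form of a hyperplane, as a polynomial. -/
def polyForm (n : ℕ) (b : Fin (n + 1) → ℂ) : MvPolynomial (Fin (n + 1)) ℂ :=
  ∑ m, MvPolynomial.C (b m) * MvPolynomial.X m

/-! ### Auxiliary lemmas -/

lemma linForm_apply (n : ℕ) (b x : Fin (n+1) → ℂ) : linForm n b x = ∑ m, b m * x m := by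
  simp [linForm]

lemma polyForm_eval (n : ℕ) (b p : Fin (n+1) → ℂ) :
    MvPolynomial.eval p (polyForm n b) = linForm n b p := by
  simp [polyForm, linForm_apply]

lemma wedgeMon_eq_iMulti (l m : ℕ) (g : Fin m → Fin l) :
    wedgeMon l m g = ιMulti ℂ m (fun i => Pi.single (g i) (1:ℂ)) := by
  rw [ιMulti_apply]; rfl

lemma wedgeMon_comp_perm (l m : ℕ) (g : Fin m → Fin l) (σ : Equiv.Perm (Fin m)) :
    wedgeMon l m (g ∘ σ) = Equiv.Perm.sign σ • wedgeMon l m g := by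
  rw [wedgeMon_eq_iMulti, wedgeMon_eq_iMulti]
  exact AlternatingMap.map_perm (ιMulti ℂ m) (fun i => (Pi.single (g i) (1:ℂ) : Fin l → ℂ)) σ

lemma wedgeMon_eq_zero_of_not_injective (l m : ℕ) (g : Fin m → Fin l)
    (h : ¬ Function.Injective g) : wedgeMon l m g = 0 := by
  simp only [Function.Injective, not_forall] at h
  obtain ⟨i, i', hii, hne⟩ := h
  rw [wedgeMon_eq_iMulti]
  exact AlternatingMap.map_eq_zero_of_eq _ _ (by rw [hii]) hne

lemma units_neg_one_pow_smul {M : Type*} [AddCommGroup M] [Module ℂ M] (m : ℕ) (x : M) :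
    (((-1 : ℤˣ) ^ m : ℤˣ)) • x = ((-1 : ℂ) ^ m) • x := by
  rw [Units.smul_def]
  have h1 : (((-1 : ℤˣ) ^ m : ℤˣ) : ℤ) = (-1 : ℤ) ^ m := by push_cast; ring
  rw [h1, ← Int.cast_smul_eq_zsmul ℂ]
  push_cast; ring_nf

lemma inf_ker_ne_bot (n m : ℕ) (hm : m ≤ n) (φ : Fin m → ((Fin (n+1) → ℂ) →ₗ[ℂ] ℂ)) :
    (⨅ i, LinearMap.ker (φ i)) ≠ ⊥ := by
  intro h
  have hk : LinearMap.ker (LinearMap.pi φ) = ⊥ := by rw [LinearMap.ker_pi]; exact h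
  have h2 := LinearMap.finrank_range_add_finrank_ker
    (LinearMap.pi φ : (Fin (n+1) → ℂ) →ₗ[ℂ] (Fin m → ℂ))
  rw [hk] at h2
  have h3 : Module.finrank ℂ (LinearMap.range (LinearMap.pi φ)) ≤ m := by
    simpa [Module.finrank_fin_fun] using Submodule.finrank_le (LinearMap.range (LinearMap.pi φ))
  rw [finrank_bot, Module.finrank_fin_fun] at h2
  omega

lemma not_linearIndependent_of_common_zero (n : ℕ)
    (φ : Fin (n+1) → ((Fin (n+1) → ℂ) →ₗ[ℂ] ℂ)) (p : Fin (n+1) → ℂ) (hp : p ≠ 0)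
    (h : ∀ k, φ k p = 0) : ¬ LinearIndependent ℂ φ := by
  intro hli
  set ev : ((Fin (n+1) → ℂ) →ₗ[ℂ] ℂ) →ₗ[ℂ] ℂ := Module.Dual.eval ℂ (Fin (n+1) → ℂ) p with hev
  have hsurj : Function.Surjective ev := by
    obtain ⟨m, hm⟩ : ∃ m, p m ≠ 0 := by
      by_contra hc; push_neg at hc; exact hp (funext hc)
    intro z
    refine ⟨(z / p m) • LinearMap.proj m, ?_⟩
    simp [hev, div_mul_cancel₀ _ hm]
  have hrange : LinearMap.range ev = ⊤ := LinearMap.range_eq_top.2 hsurj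
  have hdim := LinearMap.finrank_range_add_finrank_ker ev
  rw [hrange] at hdim
  have hdual : Module.finrank ℂ ((Fin (n+1) → ℂ) →ₗ[ℂ] ℂ) = n + 1 := by
    simp [Module.finrank_linearMap, Module.finrank_fin_fun]
  have hker : Module.finrank ℂ (LinearMap.ker ev) = n := by
    rw [finrank_top, Module.finrank_self] at hdim
    rw [hdual] at hdim
    omega
  set v' : Fin (n+1) → LinearMap.ker ev := fun k => ⟨φ k, by simp [hev, LinearMap.mem_ker, h k]⟩
    with hv'
  have hli' : LinearIndependent ℂ v' := by
    apply LinearIndependent.of_comp (LinearMap.ker ev).subtype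
    exact hli
  have := hli'.fintype_card_le_finrank
  rw [hker, Fintype.card_fin] at this
  omega

/-- The bundle of hypotheses of the main theorem used in the geometric lemmas. -/
structure Ctx (n l : ℕ) (c : Fin l → (Fin (n + 1) → ℂ)) (part : Fin l → Fin (n + 1))
    (a : Fin (n + 1) → ℂ) : Prop where
  hINNC : ∀ S : Finset (Fin l),
      2 ≤ Module.finrank ℂ (arrFlat n l (fun j => linForm n (c j)) S) →
      (onIdx n l (fun j => linForm n (c j))
          (arrFlat n l (fun j => linForm n (c j)) S)).card =
        (n + 1) - Module.finrank ℂ (arrFlat n l (fun j => linForm n (c j)) S)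
  hpt : ∀ S : Finset (Fin l),
      Module.finrank ℂ (arrFlat n l (fun j => linForm n (c j)) S) = 1 →
      (onIdx n l (fun j => linForm n (c j))
          (arrFlat n l (fun j => linForm n (c j)) S)).card = n ∨
      (onIdx n l (fun j => linForm n (c j))
          (arrFlat n l (fun j => linForm n (c j)) S)).card = n + 1
  ha : ∀ i, a i ≠ 0
  hrel : ∑ i : Fin (n + 1), MvPolynomial.C (a i) *
        ∏ j ∈ Finset.univ.filter (fun j => part j = i), polyForm n (c j) = 0

/-- The flat cut out by the hyperplanes indexed by a tuple `g`. -/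
def Kflat (n l : ℕ) (c : Fin l → (Fin (n + 1) → ℂ)) {m : ℕ} (g : Fin m → Fin l) :
    Submodule ℂ (Fin (n + 1) → ℂ) :=
  ⨅ i, LinearMap.ker (linForm n (c (g i)))

section Geom

variable {n l : ℕ} {c : Fin l → (Fin (n + 1) → ℂ)} {part : Fin l → Fin (n + 1)}
  {a : Fin (n + 1) → ℂ}

lemma Kflat_eq_arrFlat {m : ℕ} (g : Fin m → Fin l) :
    Kflat n l c g = arrFlat n l (fun j => linForm n (c j)) (Finset.image g Finset.univ) := by
  apply le_antisymm
  · refine le_iInf fun j => le_iInf fun hj => ?_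
    obtain ⟨i, _, rfl⟩ := Finset.mem_image.1 hj
    exact iInf_le _ i
  · refine le_iInf fun i => ?_
    exact iInf₂_le (g i) (Finset.mem_image.2 ⟨i, Finset.mem_univ i, rfl⟩)

lemma mem_onIdx {j : Fin l} {P : Submodule ℂ (Fin (n + 1) → ℂ)} :
    j ∈ onIdx n l (fun j => linForm n (c j)) P ↔ P ≤ LinearMap.ker (linForm n (c j)) := by
  simp [onIdx]

lemma mem_Kflat_iff {m : ℕ} {g : Fin m → Fin l} {p : Fin (n+1) → ℂ} :
    p ∈ Kflat n l c g ↔ ∀ i, linForm n (c (g i)) p = 0 := by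
  simp [Kflat, Submodule.mem_iInf, LinearMap.mem_ker]

lemma subset_onIdx {m : ℕ} (g : Fin m → Fin l) :
    Finset.image g Finset.univ ⊆
      onIdx n l (fun j => linForm n (c j)) (Kflat n l c g) := by
  intro j hj
  obtain ⟨i, _, rfl⟩ := Finset.mem_image.1 hj
  exact mem_onIdx.2 (iInf_le _ i)

lemma flat_rank_one (H : Ctx n l c part a) (hn : 1 ≤ n) (g : Fin n → Fin l)
    (hg : Function.Injective g) : Module.finrank ℂ (Kflat n l c g) = 1 := by
  rw [Kflat_eq_arrFlat (c := c) g]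
  have h0 : arrFlat n l (fun j => linForm n (c j)) (Finset.image g Finset.univ) ≠ ⊥ := by
    rw [← Kflat_eq_arrFlat]; exact inf_ker_ne_bot n n le_rfl _
  have h1 : Module.finrank ℂ
      (arrFlat n l (fun j => linForm n (c j)) (Finset.image g Finset.univ)) ≠ 0 := by
    intro h; exact h0 (Submodule.finrank_eq_zero.1 h)
  by_contra h
  have h2 : 2 ≤ Module.finrank ℂ (arrFlat n l (fun j => linForm n (c j))
      (Finset.image g Finset.univ)) := by omega
  have hcard := H.hINNC _ h2
  have hsub := subset_onIdx (c := c) g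
  rw [Kflat_eq_arrFlat (c := c) g] at hsub
  have hle := Finset.card_le_card hsub
  rw [Finset.card_image_of_injective _ hg, Finset.card_univ, Fintype.card_fin] at hle
  omega

lemma span_of_rank_one {P : Submodule ℂ (Fin (n+1) → ℂ)} (h : Module.finrank ℂ P = 1) :
    ∃ p, p ≠ 0 ∧ P = Submodule.span ℂ {p} := by
  have h0 : P ≠ ⊥ := by
    intro hb; rw [hb] at h; simp [finrank_bot] at h
  obtain ⟨p, hp, hp0⟩ := (Submodule.ne_bot_iff _).1 h0
  refine ⟨p, hp0, ?_⟩
  have hle : Submodule.span ℂ {p} ≤ P := (Submodule.span_singleton_le_iff_mem _ _).2 hp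
  exact (Submodule.eq_of_le_of_finrank_le hle
    (by rw [h, finrank_span_singleton hp0])).symm

lemma blocks_full (H : Ctx n l c part a) (p : Fin (n+1) → ℂ) (i₀ : Fin (n+1))
    (h : ∀ i, i ≠ i₀ → ∃ s, part s = i ∧ linForm n (c s) p = 0) :
    ∃ j, part j = i₀ ∧ linForm n (c j) p = 0 := by
  classical
  have he := congrArg (MvPolynomial.eval p) H.hrel
  simp only [map_sum, map_mul, MvPolynomial.eval_C, MvPolynomial.eval_prod, polyForm_eval,
    map_zero] at he
  have hz : ∀ i ∈ Finset.univ, i ≠ i₀ →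
      (a i * ∏ j ∈ Finset.univ.filter (fun j => part j = i), linForm n (c j) p) = 0 := by
    intro i _ hi
    obtain ⟨s, hs1, hs2⟩ := h i hi
    rw [Finset.prod_eq_zero (Finset.mem_filter.2 ⟨Finset.mem_univ s, hs1⟩) hs2, mul_zero]
  rw [Finset.sum_eq_single i₀ hz (fun hni => absurd (Finset.mem_univ i₀) hni)] at he
  have hprod : (∏ j ∈ Finset.univ.filter (fun j => part j = i₀), linForm n (c j) p) = 0 :=
    (mul_eq_zero.1 he).resolve_left (H.ha i₀)
  obtain ⟨j, hj, hj0⟩ := Finset.prod_eq_zero_iff.1 hprod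
  exact ⟨j, (Finset.mem_filter.1 hj).2, hj0⟩

lemma unique_compl (H : Ctx n l c part a) (hn : 1 ≤ n) (g : Fin n → Fin l)
    (hinj : Function.Injective (fun i => part (g i)))
    (i₀ : Fin (n+1)) (hi₀ : ∀ i, part (g i) ≠ i₀) :
    ∃! j, part j = i₀ ∧ Kflat n l c g ≤ LinearMap.ker (linForm n (c j)) := by
  classical
  have hginj : Function.Injective g := fun i i' hgi => hinj (by simp [hgi])
  have hr := flat_rank_one H hn g hginj
  obtain ⟨p, hp0, hPspan⟩ := span_of_rank_one hr
  have hpK : p ∈ Kflat n l c g := hPspan ▸ Submodule.mem_span_singleton_self p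
  have hsurj : ∀ i : Fin (n+1), i ≠ i₀ → ∃ s : Fin n, part (g s) = i := by
    intro i hi
    set F : Fin n → {k : Fin (n+1) // k ≠ i₀} := fun s => ⟨part (g s), hi₀ s⟩ with hF
    have hFinj : Function.Injective F := fun s s' hss =>
      hinj (congrArg Subtype.val hss)
    have hcard : Fintype.card {k : Fin (n+1) // k ≠ i₀} = n := by
      simp [Fintype.card_subtype_compl]
    have hFsurj : Function.Surjective F :=
      ((Fintype.bijective_iff_injective_and_card F).2
        ⟨hFinj, by simp [hcard]⟩).2
    obtain ⟨s, hs⟩ := hFsurj ⟨i, hi⟩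
    exact ⟨s, congrArg Subtype.val hs⟩
  obtain ⟨j, hj1, hj2⟩ := blocks_full H p i₀ (by
    intro i hi
    obtain ⟨s, hs⟩ := hsurj i hi
    exact ⟨g s, hs, (mem_Kflat_iff).1 hpK s⟩)
  refine ⟨j, ⟨hj1, ?_⟩, ?_⟩
  · rw [hPspan]
    exact (Submodule.span_singleton_le_iff_mem _ _).2 hj2
  · rintro j' ⟨hj'1, hj'2⟩
    by_contra hne
    have hjK : Kflat n l c g ≤ LinearMap.ker (linForm n (c j)) := by
      rw [hPspan]; exact (Submodule.span_singleton_le_iff_mem _ _).2 hj2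
    have hnotmem : ∀ j'' , part j'' = i₀ → j'' ∉ Finset.image g Finset.univ := by
      intro j'' hj'' hmem
      obtain ⟨i, _, rfl⟩ := Finset.mem_image.1 hmem
      exact hi₀ i hj''
    have hsub : insert j' (insert j (Finset.image g Finset.univ)) ⊆
        onIdx n l (fun j => linForm n (c j))
          (arrFlat n l (fun j => linForm n (c j)) (Finset.image g Finset.univ)) := by
      intro x hx
      rcases Finset.mem_insert.1 hx with rfl | hx
      · exact mem_onIdx.2 (by rw [← Kflat_eq_arrFlat]; exact hj'2)
      rcases Finset.mem_insert.1 hx with rfl | hx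
      · exact mem_onIdx.2 (by rw [← Kflat_eq_arrFlat]; exact hjK)
      · rw [← Kflat_eq_arrFlat]; exact subset_onIdx g hx
    have hcard2 := Finset.card_le_card hsub
    rw [Finset.card_insert_of_notMem (by
        simp only [Finset.mem_insert]
        push_neg
        exact ⟨hne, hnotmem j' hj'1⟩),
      Finset.card_insert_of_notMem (hnotmem j hj1),
      Finset.card_image_of_injective _ hginj, Finset.card_univ, Fintype.card_fin] at hcard2
    have hpt := H.hpt (Finset.image g Finset.univ) (by rw [← Kflat_eq_arrFlat]; exact hr)
    omega

lemma K_update (H : Ctx n l c part a) (hn : 1 ≤ n) (g : Fin n → Fin l) (t : Fin n) (j : Fin l)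
    (hinj : Function.Injective (fun i => part (g i)))
    (hinj2 : Function.Injective (fun i => part (Function.update g t j i)))
    (hKj : Kflat n l c g ≤ LinearMap.ker (linForm n (c j))) :
    Kflat n l c (Function.update g t j) = Kflat n l c g := by
  classical
  have hginj : Function.Injective g := fun i i' hgi => hinj (by simp [hgi])
  have hr := flat_rank_one H hn g hginj
  obtain ⟨p, hp0, hspan⟩ := span_of_rank_one hr
  have hpK : p ∈ Kflat n l c g := hspan ▸ Submodule.mem_span_singleton_self p
  have hginj2 : Function.Injective (Function.update g t j) := fun i i' hgi =>
    hinj2 (by simp [hgi])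
  have hr2 := flat_rank_one H hn (Function.update g t j) hginj2
  have hle : Submodule.span ℂ {p} ≤ Kflat n l c (Function.update g t j) := by
    refine (Submodule.span_singleton_le_iff_mem _ _).2 (mem_Kflat_iff.2 fun i => ?_)
    by_cases hit : i = t
    · subst hit; rw [Function.update_self]; exact hKj hpK
    · rw [Function.update_of_ne hit]; exact (mem_Kflat_iff).1 hpK i
  have heq : Submodule.span ℂ {p} = Kflat n l c (Function.update g t j) :=
    Submodule.eq_of_le_of_finrank_le hle (by rw [hr2, finrank_span_singleton hp0])
  rw [← heq, hspan]

end Geom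

/-- The key combinatorial identity for the Orlik–Solomon boundary of `x_j ∧ x_{g 0} ∧ ⋯`. -/
lemma boundary_cons (l N : ℕ) (g : Fin (N + 1) → Fin l) (j : Fin l) :
    osBoundary l (N + 1) (Fin.cons j g) =
      wedgeMon l (N + 1) g - ∑ t : Fin (N + 1), wedgeMon l (N + 1) (Function.update g t j) := by
  classical
  unfold osBoundary
  rw [Fin.sum_univ_succ]
  have h0 : (Fin.cons j g : Fin (N + 2) → Fin l) ∘ (0 : Fin (N + 2)).succAbove = g := by
    funext i
    simp [Fin.zero_succAbove, Fin.cons_succ]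
  have hs : ∀ s : Fin (N + 1),
      Function.update g s j =
        ((Fin.cons j g : Fin (N + 2) → Fin l) ∘ (Fin.succ s).succAbove) ∘ (Fin.cycleRange s) := by
    intro s
    funext i
    rcases lt_trichotomy i s with hlt | rfl | hgt
    · rw [Function.comp_apply, Function.comp_apply, Fin.cycleRange_of_lt hlt,
        Function.update_of_ne (Fin.ne_of_lt hlt)]
      have hival : ((i + 1 : Fin (N + 1)) : ℕ) = (i : ℕ) + 1 :=
        Fin.val_add_one_of_lt (lt_of_lt_of_le hlt (Fin.le_last s))
      have hcast : Fin.castSucc (i + 1 : Fin (N + 1)) = Fin.succ i := by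
        apply Fin.ext
        simp [hival]
      rw [Fin.succAbove_of_castSucc_lt _ _ (by
          rw [Fin.lt_def, hcast]
          simp only [Fin.val_succ]
          exact Nat.add_lt_add_right hlt 1), hcast, Fin.cons_succ]
    · rw [Function.comp_apply, Function.comp_apply, Fin.cycleRange_self,
        Function.update_self]
      rw [Fin.succAbove_of_castSucc_lt _ _ (by
          rw [Fin.lt_def]
          simp)]
      simp [Fin.cons_zero]
    · rw [Function.comp_apply, Function.comp_apply, Fin.cycleRange_of_gt hgt,
        Function.update_of_ne (Fin.ne_of_gt hgt)]
      rw [Fin.succAbove_of_le_castSucc _ _ (by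
          rw [Fin.le_def]
          simp only [Fin.val_succ, Fin.coe_castSucc]
          exact Nat.succ_le_of_lt hgt), Fin.cons_succ]
  have hterm : ∀ s : Fin (N + 1),
      ((-1 : ℂ) ^ ((Fin.succ s : Fin (N + 2)) : ℕ)) •
        wedgeMon l (N + 1) ((Fin.cons j g : Fin (N + 2) → Fin l) ∘ (Fin.succ s).succAbove) =
      - wedgeMon l (N + 1) (Function.update g s j) := by
    intro s
    have h1 : wedgeMon l (N + 1) (Function.update g s j) =
        Equiv.Perm.sign (Fin.cycleRange s) •
          wedgeMon l (N + 1) ((Fin.cons j g : Fin (N + 2) → Fin l) ∘ (Fin.succ s).succAbove) := by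
      rw [← wedgeMon_comp_perm, ← hs s]
    rw [Fin.sign_cycleRange, units_neg_one_pow_smul] at h1
    rw [h1, Fin.val_succ, ← neg_smul]
    congr 1
    rw [pow_succ]
    ring
  rw [h0, Finset.sum_congr rfl (fun s _ => hterm s)]
  simp only [Fin.val_zero, pow_zero, one_smul]
  rw [Finset.sum_neg_distrib, sub_eq_add_neg]

lemma alt_zero_on_span {M N : Type*} [AddCommGroup M] [Module ℂ M] [FiniteDimensional ℂ M]
    [AddCommGroup N] [Module ℂ N] {n : ℕ} (F : M [⋀^Fin n]→ₗ[ℂ] N) (w : Fin n → M)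
    (hFw : F w = 0) (u : Fin n → M) (hu : ∀ i, u i ∈ Submodule.span ℂ (Set.range w)) :
    F u = 0 := by
  classical
  by_cases hind : LinearIndependent ℂ u
  · set W := Submodule.span ℂ (Set.range w) with hW
    set u' : Fin n → W := fun i => ⟨u i, hu i⟩ with hu'
    set w' : Fin n → W := fun i => ⟨w i, Submodule.subset_span (Set.mem_range_self i)⟩ with hw'
    have hu'li : LinearIndependent ℂ u' :=
      LinearIndependent.of_comp W.subtype (by exact hind)
    have hrank_ge : n ≤ Module.finrank ℂ W := by
      simpa using hu'li.fintype_card_le_finrank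
    have hrank_le : Module.finrank ℂ W ≤ n := by
      have h := finrank_range_le_card (R := ℂ) w; rw [Fintype.card_fin] at h; exact h
    have hspan' : ⊤ ≤ Submodule.span ℂ (Set.range w') := by
      have hmap : Submodule.map W.subtype (Submodule.span ℂ (Set.range w')) =
          Submodule.map W.subtype ⊤ := by
        rw [Submodule.map_span, Submodule.map_top, Submodule.range_subtype]
        congr 1
        rw [← Set.range_comp]
        rfl
      exact le_of_eq (Submodule.map_injective_of_injective W.injective_subtype hmap).symm
    set G := F.compLinearMap W.subtype with hG
    have hGzero : G = 0 := by
      apply Module.Basis.ext_alternating (basisOfTopLeSpanOfCardEqFinrank w' hspan'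
        (by rw [Fintype.card_fin]; omega))
      intro v hv
      have hbij : Function.Bijective v := Finite.injective_iff_bijective.1 hv
      set σ : Equiv.Perm (Fin n) := Equiv.ofBijective v hbij with hσ
      have hcomp : (fun i => basisOfTopLeSpanOfCardEqFinrank w' hspan'
          (by rw [Fintype.card_fin]; omega) (v i)) = w' ∘ σ := by
        funext i
        simp [coe_basisOfTopLeSpanOfCardEqFinrank, hσ, Equiv.ofBijective_apply]
      rw [hcomp, AlternatingMap.zero_apply, AlternatingMap.map_perm]
      have hGw' : G w' = F w := rfl
      rw [hGw', hFw, smul_zero]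
    have : F u = G u' := rfl
    rw [this, hGzero, AlternatingMap.zero_apply]
  · exact F.map_linearDependent u hind


set_option maxHeartbeats 2000000 in
/-- One direction of the main theorem: if a hyperplane arrangement `A = {H_1,…,H_l}` with
isolated non-normal crossings, each crossing being a point on exactly `n+1` hyperplanes,
admits a partition `Π_1,…,Π_{n+1}` and nonzero scalars `a_i` with
`a_1 f_1 + ⋯ + a_{n+1} f_{n+1} = 0` (where `f_i` is the product of the defining linear
forms of the hyperplanes of `Π_i`), then the subspace `V` of the degree-one part of the
Orlik–Solomon algebra spanned by `{Σ_{H_j ∈ Π_i} x_j − Σ_{H_j ∈ Π_{n+1}} x_j : 1 ≤ i ≤ n}`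
is `n`-isotropic and not contained in any coordinate hyperplane. -/
theorem stmt_16 (n l : ℕ) (hn : 1 ≤ n)
    (c : Fin l → (Fin (n + 1) → ℂ)) (hc : ∀ j, c j ≠ 0)
    (hdist : ∀ j j' : Fin l,
      LinearMap.ker (linForm n (c j)) = LinearMap.ker (linForm n (c j')) → j = j')
    (hINNC : ∀ S : Finset (Fin l),
      2 ≤ Module.finrank ℂ (arrFlat n l (fun j => linForm n (c j)) S) →
      (onIdx n l (fun j => linForm n (c j))
          (arrFlat n l (fun j => linForm n (c j)) S)).card =
        (n + 1) - Module.finrank ℂ (arrFlat n l (fun j => linForm n (c j)) S))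
    (hpt : ∀ S : Finset (Fin l),
      Module.finrank ℂ (arrFlat n l (fun j => linForm n (c j)) S) = 1 →
      (onIdx n l (fun j => linForm n (c j))
          (arrFlat n l (fun j => linForm n (c j)) S)).card = n ∨
      (onIdx n l (fun j => linForm n (c j))
          (arrFlat n l (fun j => linForm n (c j)) S)).card = n + 1)
    (part : Fin l → Fin (n + 1)) (hpart : Function.Surjective part)
    (a : Fin (n + 1) → ℂ) (ha : ∀ i, a i ≠ 0)
    (hrel : ∑ i : Fin (n + 1), MvPolynomial.C (a i) *
        ∏ j ∈ Finset.univ.filter (fun j => part j = i), polyForm n (c j) = 0)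
    (w : Fin n → (Fin l → ℂ))
    (hw : ∀ (i : Fin n) (j : Fin l),
      w i j = (if part j = i.castSucc then (1 : ℂ) else 0) -
        (if part j = Fin.last n then (1 : ℂ) else 0)) :
    (∀ u : Fin n → (Fin l → ℂ),
      (∀ i, u i ∈ Submodule.span ℂ (Set.range w)) →
      osProj n l (fun j => linForm n (c j))
        ((List.ofFn fun i : Fin n => ι ℂ (u i)).prod) = 0) ∧
    ∀ j : Fin l, ¬ (∀ x ∈ Submodule.span ℂ (Set.range w), x j = 0) := by
  classical
  obtain ⟨N, rfl⟩ : ∃ N, n = N + 1 := ⟨n - 1, by omega⟩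
  have H : Ctx (N + 1) l c part a := ⟨hINNC, hpt, ha, hrel⟩
  have hcast_ne_last : ∀ i : Fin (N + 1), Fin.castSucc i ≠ Fin.last (N + 1) :=
    fun i => (Fin.castSucc_lt_last i).ne
  -- value lemmas for w
  have hwlast : ∀ (i : Fin (N + 1)) (j' : Fin l),
      part j' = Fin.last (N + 1) → w i j' = -1 := by
    intro i j' hj'
    rw [hw i j', hj', if_neg (Ne.symm (hcast_ne_last i)), if_pos rfl]
    ring
  have hwdiag : ∀ (i : Fin (N + 1)) (j' : Fin l),
      part j' = Fin.castSucc i → w i j' = 1 := by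
    intro i j' hj'
    rw [hw i j', hj', if_pos rfl, if_neg (hcast_ne_last i)]
    ring
  have hwzero : ∀ (i : Fin (N + 1)) (j' : Fin l),
      part j' ≠ Fin.castSucc i → part j' ≠ Fin.last (N + 1) → w i j' = 0 := by
    intro i j' h1 h2
    rw [hw i j', if_neg h1, if_neg h2]
    ring
  constructor
  · -- Part 1: isotropy
    set π := osProj (N + 1) l (fun j => linForm (N + 1) (c j)) with hπdef
    set F : (Fin l → ℂ) [⋀^Fin (N + 1)]→ₗ[ℂ] OSAlg (N + 1) l (fun j => linForm (N + 1) (c j)) :=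
      π.toLinearMap.compAlternatingMap (ιMulti ℂ (N + 1)) with hF
    have hFapp : ∀ v : Fin (N + 1) → (Fin l → ℂ),
        F v = π ((List.ofFn fun i : Fin (N + 1) => ι ℂ (v i)).prod) := by
      intro v
      rw [hF, LinearMap.compAlternatingMap_apply, ιMulti_apply]
      rfl
    -- the coefficient function and summand
    set cf : (Fin (N + 1) → Fin l) → ℂ := fun g => ∏ i, w i (g i) with hcf
    set f : (Fin (N + 1) → Fin l) → OSAlg (N + 1) l (fun j => linForm (N + 1) (c j)) :=
      fun g => cf g • π (wedgeMon l (N + 1) g) with hfdef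
    -- expansion of the wedge of the w's
    have hww : w = fun i => ∑ j, w i j • (Pi.single j 1 : Fin l → ℂ) := by
      funext i k
      rw [Finset.sum_apply]
      simp [Pi.single_apply]
    have hexp : (ιMulti ℂ (N + 1)) w = ∑ g : Fin (N + 1) → Fin l,
        cf g • wedgeMon l (N + 1) g := by
      conv_lhs => rw [hww]
      have h2 := MultilinearMap.map_sum (ιMulti ℂ (N + 1) (M := Fin l → ℂ)).toMultilinearMap
        (g := fun (i : Fin (N + 1)) (j : Fin l) => w i j • (Pi.single j 1 : Fin l → ℂ))
      rw [show ((ιMulti ℂ (N + 1)) (fun i => ∑ j, w i j • (Pi.single j 1 : Fin l → ℂ)))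
          = (ιMulti ℂ (N + 1)).toMultilinearMap
            (fun i => ∑ j, w i j • (Pi.single j 1 : Fin l → ℂ)) from rfl, h2]
      refine Finset.sum_congr rfl fun g _ => ?_
      rw [MultilinearMap.map_smul_univ, wedgeMon_eq_iMulti]
      rfl
    have hπsum : F w = ∑ g : Fin (N + 1) → Fin l, f g := by
      have h1 : F w = π ((ιMulti ℂ (N + 1)) w) := rfl
      rw [h1, hexp, map_sum]
      refine Finset.sum_congr rfl fun g _ => ?_
      rw [map_smul]
    -- basic coefficient computations
    have hcf_diag : ∀ g : Fin (N + 1) → Fin l,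
        (∀ i, part (g i) = Fin.castSucc i) → cf g = 1 := by
      intro g hg
      exact Finset.prod_eq_one fun i _ => hwdiag i (g i) (hg i)
    have hcf_upd : ∀ (g : Fin (N + 1) → Fin l) (t : Fin (N + 1)) (j' : Fin l),
        (∀ i, part (g i) = Fin.castSucc i) → part j' = Fin.last (N + 1) →
        cf (Function.update g t j') = -1 := by
      intro g t j' hg hj'
      rw [show cf (Function.update g t j') = ∏ i, w i (Function.update g t j' i) from rfl,
        Finset.prod_eq_single t
          (fun i _ hit => by rw [Function.update_of_ne hit]; exact hwdiag i (g i) (hg i))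
          (fun h => absurd (Finset.mem_univ t) h),
        Function.update_self]
      exact hwlast t j' hj'
    have hclass0 : ∀ (g : Fin (N + 1) → Fin l) (i : Fin (N + 1)), cf g ≠ 0 →
        part (g i) = Fin.castSucc i ∨ part (g i) = Fin.last (N + 1) := by
      intro g i hcf0
      by_contra hcon
      push_neg at hcon
      exact hcf0 (Finset.prod_eq_zero (Finset.mem_univ i) (hwzero i (g i) hcon.1 hcon.2))
    -- injectivity of part ∘ g for diagonal g
    have hdiag_inj : ∀ g : Fin (N + 1) → Fin l, (∀ i, part (g i) = Fin.castSucc i) →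
        Function.Injective (fun i => part (g i)) := by
      intro g hg i i' hii
      simp only [hg] at hii
      exact Fin.castSucc_injective _ hii
    have hdiag_ne : ∀ g : Fin (N + 1) → Fin l, (∀ i, part (g i) = Fin.castSucc i) →
        ∀ i, part (g i) ≠ Fin.last (N + 1) := by
      intro g hg i
      rw [hg i]; exact hcast_ne_last i
    -- choice of the (unique) last-block hyperplane through the point of a diagonal monomial
    have hjex : ∀ g : Fin (N + 1) → Fin l, ∃ j0 : Fin l,
        (∀ i, part (g i) = Fin.castSucc i) →
        (part j0 = Fin.last (N + 1) ∧
          Kflat (N + 1) l c g ≤ LinearMap.ker (linForm (N + 1) (c j0)) ∧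
          ∀ j', part j' = Fin.last (N + 1) →
            Kflat (N + 1) l c g ≤ LinearMap.ker (linForm (N + 1) (c j')) → j' = j0) := by
      intro g
      by_cases hg : ∀ i, part (g i) = Fin.castSucc i
      · obtain ⟨j0, ⟨h1, h2⟩, h3⟩ := unique_compl H (by omega) g (hdiag_inj g hg)
          (Fin.last (N + 1)) (hdiag_ne g hg)
        exact ⟨j0, fun _ => ⟨h1, h2, fun j' p1 p2 => h3 j' ⟨p1, p2⟩⟩⟩
      · exact ⟨g 0, fun h => absurd h hg⟩
    choose jOf hjOf using hjex
    -- updated tuples stay injective on parts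
    have hupd_inj : ∀ (g : Fin (N + 1) → Fin l) (t : Fin (N + 1)) (j' : Fin l),
        (∀ i, part (g i) = Fin.castSucc i) → part j' = Fin.last (N + 1) →
        Function.Injective (fun i => part (Function.update g t j' i)) := by
      intro g t j' hg hj' i i' hii
      simp only at hii
      by_cases h1 : i = t <;> by_cases h2 : i' = t
      · rw [h1, h2]
      · exfalso
        rw [h1, Function.update_self, Function.update_of_ne h2, hg, hj'] at hii
        exact hcast_ne_last i' hii.symm
      · exfalso
        rw [h2, Function.update_self, Function.update_of_ne h1, hg, hj'] at hii
        exact hcast_ne_last i hii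
      · rw [Function.update_of_ne h1, Function.update_of_ne h2, hg, hg] at hii
        exact Fin.castSucc_injective _ hii
    have hKupd : ∀ (g : Fin (N + 1) → Fin l) (t : Fin (N + 1)),
        (∀ i, part (g i) = Fin.castSucc i) →
        Kflat (N + 1) l c (Function.update g t (jOf g)) = Kflat (N + 1) l c g := by
      intro g t hg
      exact K_update H (by omega) g t (jOf g) (hdiag_inj g hg)
        (hupd_inj g t (jOf g) hg (hjOf g hg).1) (hjOf g hg).2.1
    -- the finsets
    set G0 : Finset (Fin (N + 1) → Fin l) :=
      Finset.univ.filter (fun g => ∀ i, part (g i) = Fin.castSucc i) with hG0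
    set Φ : (Fin (N + 1) → Fin l) × Fin (N + 1) → (Fin (N + 1) → Fin l) :=
      fun q => Function.update q.1 q.2 (jOf q.1) with hΦ
    set G1 : Finset (Fin (N + 1) → Fin l) := (G0 ×ˢ Finset.univ).image Φ with hG1
    set D : Finset (Fin (N + 1) → Fin l) := G0 ∪ G1 with hD
    set lastSlots : (Fin (N + 1) → Fin l) → Finset (Fin (N + 1)) :=
      fun g => Finset.univ.filter (fun i => part (g i) = Fin.last (N + 1)) with hls
    have hls_mem : ∀ g i, i ∈ lastSlots g ↔ part (g i) = Fin.last (N + 1) := by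
      intro g i; simp [hls]
    -- lastSlots of updated diagonal tuples
    have hlastSlots_upd : ∀ (g : Fin (N + 1) → Fin l) (t : Fin (N + 1)) (j' : Fin l),
        (∀ i, part (g i) = Fin.castSucc i) → part j' = Fin.last (N + 1) →
        lastSlots (Function.update g t j') = {t} := by
      intro g t j' hg hj'
      ext i
      rw [hls_mem, Finset.mem_singleton]
      constructor
      · intro hi
        by_contra hit
        rw [Function.update_of_ne hit, hg i] at hi
        exact hcast_ne_last i hi
      · intro hi; rw [hi, Function.update_self]; exact hj'
    -- injectivity of Φ
    have hΦinj : ∀ q ∈ G0 ×ˢ (Finset.univ : Finset (Fin (N + 1))),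
        ∀ q' ∈ G0 ×ˢ (Finset.univ : Finset (Fin (N + 1))), Φ q = Φ q' → q = q' := by
      rintro ⟨g, t⟩ hq ⟨g', t'⟩ hq' heq
      rw [Finset.mem_product, hG0, Finset.mem_filter] at hq hq'
      have hg : ∀ i, part (g i) = Fin.castSucc i := hq.1.2
      have hg' : ∀ i, part (g' i) = Fin.castSucc i := hq'.1.2
      obtain ⟨hj1, hj2, hj3⟩ := hjOf g hg
      obtain ⟨hj1', hj2', hj3'⟩ := hjOf g' hg'
      have ht : t = t' := by
        have h1 : part (Φ (g, t) t) = Fin.last (N + 1) := by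
          simp only [hΦ, Function.update_self]; exact hj1
        by_contra htt
        rw [heq] at h1
        simp only [hΦ] at h1
        rw [Function.update_of_ne htt, hg' t] at h1
        exact hcast_ne_last t h1
      subst ht
      have hagree : ∀ i, i ≠ t → g i = g' i := by
        intro i hit
        have h1 := congrFun heq i
        simpa only [hΦ, Function.update_of_ne hit] using h1
      have hKu : Kflat (N + 1) l c (Φ (g, t)) = Kflat (N + 1) l c g := hKupd g t hg
      have hKu' : Kflat (N + 1) l c (Φ (g', t)) = Kflat (N + 1) l c g' := hKupd g' t hg'
      have hmiss : ∀ i, part (Φ (g, t) i) ≠ Fin.castSucc t := by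
        intro i
        by_cases hit : i = t
        · subst hit
          simp only [hΦ, Function.update_self]
          rw [hj1]; exact Ne.symm (hcast_ne_last _)
        · simp only [hΦ, Function.update_of_ne hit]
          rw [hg i]
          intro hcon
          exact hit (Fin.castSucc_injective _ hcon)
      obtain ⟨jc, hjc, hjcu⟩ := unique_compl H (by omega) (Φ (g, t))
        (hupd_inj g t (jOf g) hg hj1) (Fin.castSucc t) hmiss
      have h1 : g t = jc := hjcu (g t) ⟨hg t, by rw [hKu]; exact iInf_le _ t⟩
      have h2 : g' t = jc := hjcu (g' t) ⟨hg' t, by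
        rw [show Φ (g, t) = Φ (g', t) from heq, hKu']; exact iInf_le _ t⟩
      have hgg : g = g' := funext fun i => by
        by_cases hit : i = t
        · rw [hit, h1, h2]
        · exact hagree i hit
      rw [hgg]
    -- surjectivity onto the one-last-slot monomials
    have hmemG1 : ∀ g : Fin (N + 1) → Fin l, cf g ≠ 0 → ∀ t,
        part (g t) = Fin.last (N + 1) →
        (∀ i, i ≠ t → part (g i) = Fin.castSucc i) → g ∈ G1 := by
      intro g hcf0 t hgt hgi
      have hpinj : Function.Injective (fun i => part (g i)) := by
        intro i i' hii
        simp only at hii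
        by_cases h1 : i = t <;> by_cases h2 : i' = t
        · rw [h1, h2]
        · exfalso; rw [h1, hgt, hgi i' h2] at hii; exact hcast_ne_last i' hii.symm
        · exfalso; rw [h2, hgt, hgi i h1] at hii; exact hcast_ne_last i hii
        · rw [hgi i h1, hgi i' h2] at hii; exact Fin.castSucc_injective _ hii
      have hmiss : ∀ i, part (g i) ≠ Fin.castSucc t := by
        intro i
        by_cases hit : i = t
        · subst hit; rw [hgt]; exact Ne.symm (hcast_ne_last _)
        · rw [hgi i hit]
          intro hcon
          exact hit (Fin.castSucc_injective _ hcon)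
      obtain ⟨jc, ⟨hjc1, hjc2⟩, hjcu⟩ := unique_compl H (by omega) g hpinj
        (Fin.castSucc t) hmiss
      set g0 := Function.update g t jc with hg0
      have hdiag0 : ∀ i, part (g0 i) = Fin.castSucc i := by
        intro i
        by_cases hit : i = t
        · subst hit; rw [hg0, Function.update_self]; exact hjc1
        · rw [hg0, Function.update_of_ne hit]; exact hgi i hit
      have hKg0 : Kflat (N + 1) l c g0 = Kflat (N + 1) l c g := by
        refine K_update H (by omega) g t jc hpinj ?_ hjc2
        intro i i' hii
        simp only at hii
        rw [show Function.update g t jc = g0 from rfl] at hii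
        rw [hdiag0 i, hdiag0 i'] at hii
        exact Fin.castSucc_injective _ hii
      obtain ⟨hj1, hj2, hj3⟩ := hjOf g0 hdiag0
      have hjeq : g t = jOf g0 := hj3 (g t) hgt (by rw [hKg0]; exact iInf_le _ t)
      have hΦeq : Φ (g0, t) = g := by
        simp only [hΦ]
        rw [← hjeq, hg0, Function.update_idem, Function.update_eq_self]
      rw [hG1]
      refine Finset.mem_image.2 ⟨(g0, t), ?_, hΦeq⟩
      rw [Finset.mem_product]
      exact ⟨by rw [hG0]; exact Finset.mem_filter.2 ⟨Finset.mem_univ _, hdiag0⟩,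
        Finset.mem_univ _⟩
    -- boundary relations kill the diagonal groups
    have hbnd : ∀ g : Fin (N + 1) → Fin l, (∀ i, part (g i) = Fin.castSucc i) →
        π (wedgeMon l (N + 1) g) -
          ∑ t : Fin (N + 1), π (wedgeMon l (N + 1) (Function.update g t (jOf g))) = 0 := by
      intro g hg
      obtain ⟨hj1, hj2, hj3⟩ := hjOf g hg
      have hginj : Function.Injective g := fun i i' hii => hdiag_inj g hg (by simp [hii])
      have hdep : ¬ LinearIndependent ℂ
          (fun k => linForm (N + 1) (c ((Fin.cons (jOf g) g : Fin (N + 1 + 1) → Fin l) k))) := by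
        have hr := flat_rank_one H (by omega) g hginj
        obtain ⟨p, hp0, hspan⟩ := span_of_rank_one hr
        have hpK : p ∈ Kflat (N + 1) l c g := hspan ▸ Submodule.mem_span_singleton_self p
        apply not_linearIndependent_of_common_zero (N + 1) _ p hp0
        intro k
        refine Fin.cases ?_ ?_ k
        · rw [Fin.cons_zero]; exact hj2 hpK
        · intro s; rw [Fin.cons_succ]; exact (mem_Kflat_iff).1 hpK s
      have hrel0 : π (osBoundary l (N + 1) (Fin.cons (jOf g) g)) = 0 := by
        have h1 := RingQuot.mkAlgHom_rel ℂ
          (s := osRel (N + 1) l (fun j => linForm (N + 1) (c j)))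
          (x := osBoundary l (N + 1) (Fin.cons (jOf g) g)) (y := 0)
          ⟨Or.inl ⟨N + 1, Fin.cons (jOf g) g, hdep, rfl⟩, rfl⟩
        rw [hπdef]
        calc osProj (N + 1) l (fun j => linForm (N + 1) (c j))
              (osBoundary l (N + 1) (Fin.cons (jOf g) g))
            = osProj (N + 1) l (fun j => linForm (N + 1) (c j)) 0 := h1
          _ = 0 := map_zero _
      rw [boundary_cons, map_sub, map_sum] at hrel0
      exact hrel0
    -- the two canonical last-slots of a bad monomial
    set s1 : (Fin (N + 1) → Fin l) → Fin (N + 1) :=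
      fun g => if h : (lastSlots g).Nonempty then (lastSlots g).min' h else 0 with hs1
    set s2 : (Fin (N + 1) → Fin l) → Fin (N + 1) :=
      fun g => if h : ((lastSlots g).erase (s1 g)).Nonempty
        then ((lastSlots g).erase (s1 g)).min' h else 0 with hs2
    have hs1mem : ∀ g, 2 ≤ (lastSlots g).card → s1 g ∈ lastSlots g := by
      intro g h2
      have hne : (lastSlots g).Nonempty := Finset.card_pos.1 (by omega)
      rw [hs1]; simp only [dif_pos hne]
      exact Finset.min'_mem _ _
    have hs2mem : ∀ g, 2 ≤ (lastSlots g).card → s2 g ∈ (lastSlots g).erase (s1 g) := by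
      intro g h2
      have hne : ((lastSlots g).erase (s1 g)).Nonempty := by
        rw [← Finset.card_pos, Finset.card_erase_of_mem (hs1mem g h2)]
        omega
      rw [hs2]; simp only [dif_pos hne]
      exact Finset.min'_mem _ _
    have hs12ne : ∀ g, 2 ≤ (lastSlots g).card → s1 g ≠ s2 g := by
      intro g h2
      exact (Finset.ne_of_mem_erase (hs2mem g h2)).symm
    have hs1congr : ∀ g g', lastSlots g = lastSlots g' → s1 g = s1 g' := by
      intro g g' hgg'
      rw [hs1]; simp only [hgg']
    have hs2congr : ∀ g g', lastSlots g = lastSlots g' → s2 g = s2 g' := by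
      intro g g' hgg'
      rw [hs2]; simp only [hgg', hs1congr g g' hgg']
    -- swap facts
    have hls_swap : ∀ g, 2 ≤ (lastSlots g).card →
        lastSlots (g ∘ (Equiv.swap (s1 g) (s2 g))) = lastSlots g := by
      intro g h2
      have hm1 : part (g (s1 g)) = Fin.last (N + 1) := (hls_mem g _).1 (hs1mem g h2)
      have hm2 : part (g (s2 g)) = Fin.last (N + 1) :=
        (hls_mem g _).1 (Finset.mem_of_mem_erase (hs2mem g h2))
      ext i
      rw [hls_mem, hls_mem, Function.comp_apply]
      by_cases hi1 : i = s1 g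
      · subst hi1; rw [Equiv.swap_apply_left]; rw [hm1, hm2]
      by_cases hi2 : i = s2 g
      · subst hi2; rw [Equiv.swap_apply_right]; rw [hm1, hm2]
      · rw [Equiv.swap_apply_of_ne_of_ne hi1 hi2]
    have hcf_swap : ∀ g, 2 ≤ (lastSlots g).card →
        cf (g ∘ (Equiv.swap (s1 g) (s2 g))) = cf g := by
      intro g h2
      have hm1 : part (g (s1 g)) = Fin.last (N + 1) := (hls_mem g _).1 (hs1mem g h2)
      have hm2 : part (g (s2 g)) = Fin.last (N + 1) :=
        (hls_mem g _).1 (Finset.mem_of_mem_erase (hs2mem g h2))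
      refine Finset.prod_congr rfl fun i _ => ?_
      rw [Function.comp_apply]
      by_cases hi1 : i = s1 g
      · subst hi1
        rw [Equiv.swap_apply_left, hwlast _ _ hm2, hwlast _ _ hm1]
      by_cases hi2 : i = s2 g
      · subst hi2
        rw [Equiv.swap_apply_right, hwlast _ _ hm1, hwlast _ _ hm2]
      · rw [Equiv.swap_apply_of_ne_of_ne hi1 hi2]
    have hswap_wedge : ∀ g : Fin (N + 1) → Fin l, 2 ≤ (lastSlots g).card →
        wedgeMon l (N + 1) (g ∘ (Equiv.swap (s1 g) (s2 g))) = - wedgeMon l (N + 1) g := by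
      intro g h2
      rw [wedgeMon_comp_perm, Equiv.Perm.sign_swap (hs12ne g h2)]
      have h3 := units_neg_one_pow_smul (m := 1) (wedgeMon l (N + 1) g)
      simp only [pow_one] at h3
      rw [h3, neg_one_smul]
    -- membership in D for good monomials
    have hD_of_good : ∀ g : Fin (N + 1) → Fin l, Function.Injective g → cf g ≠ 0 →
        (lastSlots g).card ≤ 1 → g ∈ D := by
      intro g hginj hcf0 hcard
      rcases Nat.lt_or_ge (lastSlots g).card 1 with h0 | h1
      · -- no last slots: diagonal
        have hempty : lastSlots g = ∅ := Finset.card_eq_zero.1 (by omega)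
        have hdiag : ∀ i, part (g i) = Fin.castSucc i := by
          intro i
          rcases hclass0 g i hcf0 with h | h
          · exact h
          · exact absurd ((hls_mem g i).2 h) (by rw [hempty]; exact Finset.notMem_empty i)
        rw [hD]
        exact Finset.mem_union_left _ (by
          rw [hG0]; exact Finset.mem_filter.2 ⟨Finset.mem_univ _, hdiag⟩)
      · -- exactly one last slot
        obtain ⟨t, ht⟩ := Finset.card_eq_one.1 (le_antisymm hcard h1)
        have hgt : part (g t) = Fin.last (N + 1) :=
          (hls_mem g t).1 (by rw [ht]; exact Finset.mem_singleton_self t)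
        have hgi : ∀ i, i ≠ t → part (g i) = Fin.castSucc i := by
          intro i hit
          rcases hclass0 g i hcf0 with h | h
          · exact h
          · exact absurd (by
              have := (hls_mem g i).2 h
              rw [ht, Finset.mem_singleton] at this
              exact this) hit
        rw [hD]
        exact Finset.mem_union_right _ (hmemG1 g hcf0 t hgt hgi)
    -- elements of D have at most one last slot
    have hD_card : ∀ g ∈ D, (lastSlots g).card ≤ 1 := by
      intro g hgD
      rw [hD, Finset.mem_union] at hgD
      rcases hgD with hg0 | hg1
      · rw [hG0, Finset.mem_filter] at hg0
        have hempty : lastSlots g = ∅ := by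
          rw [Finset.eq_empty_iff_forall_notMem]
          intro i hi
          rw [hls_mem] at hi
          rw [hg0.2 i] at hi
          exact hcast_ne_last i hi
        rw [hempty]; simp
      · rw [hG1] at hg1
        obtain ⟨⟨g0, t⟩, hq, rfl⟩ := Finset.mem_image.1 hg1
        rw [Finset.mem_product, hG0, Finset.mem_filter] at hq
        rw [show Φ (g0, t) = Function.update g0 t (jOf g0) from rfl,
          hlastSlots_upd g0 t (jOf g0) hq.1.2 (hjOf g0 hq.1.2).1]
        simp
    -- nonzero summand facts
    have hf_ne : ∀ g : Fin (N + 1) → Fin l, f g ≠ 0 → cf g ≠ 0 ∧ Function.Injective g := by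
      intro g hf0
      constructor
      · intro h; exact hf0 (by rw [hfdef]; simp only [h, zero_smul])
      · by_contra hni
        exact hf0 (by
          rw [hfdef]; simp only
          rw [wedgeMon_eq_zero_of_not_injective l (N + 1) g hni, map_zero, smul_zero])
    -- the complement sum vanishes by the sign involution
    have hcomp : ∑ g ∈ Finset.univ \ D, f g = 0 := by
      apply Finset.sum_involution
        (fun g _ => if h2 : 2 ≤ (lastSlots g).card ∧ Function.Injective g ∧ cf g ≠ 0
          then g ∘ (Equiv.swap (s1 g) (s2 g)) else g)
      · intro g hg
        by_cases h2 : 2 ≤ (lastSlots g).card ∧ Function.Injective g ∧ cf g ≠ 0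
        · rw [dif_pos h2]
          have hneg : f (g ∘ (Equiv.swap (s1 g) (s2 g))) = - f g := by
            rw [hfdef]
            simp only
            rw [hcf_swap g h2.1, hswap_wedge g h2.1, map_neg, smul_neg]
          rw [hneg, add_neg_cancel]
        · rw [dif_neg h2]
          have hf0 : f g = 0 := by
            by_contra hf
            obtain ⟨hcf0, hginj⟩ := hf_ne g hf
            have hcard : 2 ≤ (lastSlots g).card := by
              by_contra hlt
              push_neg at hlt
              exact (Finset.mem_sdiff.1 hg).2 (hD_of_good g hginj hcf0 (by omega))
            exact h2 ⟨hcard, hginj, hcf0⟩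
          rw [hf0, add_zero]
      · intro g hg hf
        obtain ⟨hcf0, hginj⟩ := hf_ne g hf
        have hcard : 2 ≤ (lastSlots g).card := by
          by_contra hlt
          push_neg at hlt
          exact (Finset.mem_sdiff.1 hg).2 (hD_of_good g hginj hcf0 (by omega))
        rw [dif_pos ⟨hcard, hginj, hcf0⟩]
        intro hcon
        have h1 := congrFun hcon (s1 g)
        rw [Function.comp_apply, Equiv.swap_apply_left] at h1
        exact hs12ne g hcard ((hginj h1).symm)
      · intro g hg
        by_cases h2 : 2 ≤ (lastSlots g).card ∧ Function.Injective g ∧ cf g ≠ 0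
        · rw [dif_pos h2]
          rw [Finset.mem_sdiff]
          refine ⟨Finset.mem_univ _, ?_⟩
          intro hD1
          have := hD_card _ hD1
          rw [hls_swap g h2.1] at this
          omega
        · rw [dif_neg h2]; exact hg
      · intro g hg
        by_cases h2 : 2 ≤ (lastSlots g).card ∧ Function.Injective g ∧ cf g ≠ 0
        · simp only [dif_pos h2]
          have hlseq := hls_swap g h2.1
          have h2' : 2 ≤ (lastSlots (g ∘ (Equiv.swap (s1 g) (s2 g)))).card ∧
              Function.Injective (g ∘ (Equiv.swap (s1 g) (s2 g))) ∧
              cf (g ∘ (Equiv.swap (s1 g) (s2 g))) ≠ 0 := by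
            refine ⟨by rw [hlseq]; exact h2.1, ?_, by rw [hcf_swap g h2.1]; exact h2.2.2⟩
            exact h2.2.1.comp (Equiv.injective _)
          rw [dif_pos h2']
          have he1 : s1 (g ∘ (Equiv.swap (s1 g) (s2 g))) = s1 g := hs1congr _ _ hlseq
          have he2 : s2 (g ∘ (Equiv.swap (s1 g) (s2 g))) = s2 g := hs2congr _ _ hlseq
          rw [he1, he2]
          funext i
          simp [Equiv.swap_apply_self]
        · simp only [dif_neg h2]
    -- disjointness of G0 and G1
    have hdisj : Disjoint G0 G1 := by
      rw [Finset.disjoint_left]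
      intro g hg0 hg1
      rw [hG0, Finset.mem_filter] at hg0
      rw [hG1] at hg1
      obtain ⟨⟨g0, t⟩, hq, hΦeq⟩ := Finset.mem_image.1 hg1
      rw [Finset.mem_product, hG0, Finset.mem_filter] at hq
      have h1 : part (g t) = Fin.last (N + 1) := by
        rw [← hΦeq]
        show part (Function.update g0 t (jOf g0) t) = _
        rw [Function.update_self]
        exact (hjOf g0 hq.1.2).1
      rw [hg0.2 t] at h1
      exact hcast_ne_last t h1
    -- final assembly
    have hFw : F w = 0 := by
      rw [hπsum, ← Finset.sum_sdiff (Finset.subset_univ D), hcomp, zero_add, hD,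
        Finset.sum_union hdisj, Finset.sum_image hΦinj, Finset.sum_product,
        ← Finset.sum_add_distrib]
      apply Finset.sum_eq_zero
      intro g hgG0
      rw [hG0, Finset.mem_filter] at hgG0
      have hg := hgG0.2
      have h1 : f g = π (wedgeMon l (N + 1) g) := by
        rw [hfdef]
        simp only
        rw [hcf_diag g hg, one_smul]
      have h2 : ∀ t, f (Φ (g, t)) = - π (wedgeMon l (N + 1) (Function.update g t (jOf g))) := by
        intro t
        rw [hfdef]
        simp only [hΦ]
        rw [hcf_upd g t (jOf g) hg (hjOf g hg).1, neg_smul, one_smul]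
      rw [h1, Finset.sum_congr rfl (fun t _ => h2 t), Finset.sum_neg_distrib,
        ← sub_eq_add_neg]
      exact hbnd g hg
    intro u hu
    rw [← hFapp u]
    exact alt_zero_on_span F w hFw u hu
  · -- Part 2: not contained in a coordinate hyperplane
    intro j hall
    rcases Fin.eq_castSucc_or_eq_last (part j) with ⟨i, hi⟩ | hlast
    · have hx := hall (w i) (Submodule.subset_span (Set.mem_range_self i))
      rw [hwdiag i j hi] at hx
      exact one_ne_zero hx
    · have hx := hall (w 0) (Submodule.subset_span (Set.mem_range_self 0))
      rw [hwlast 0 j hlast] at hx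
      exact (neg_ne_zero.2 one_ne_zero) hx

end
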